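/- For a category C with pullbacks, the two canonical classes of morphisms in the category Span(C) — spans whose forward leg is an identity, and spans whose backward leg is an identity — form a weak factorization system on Span(C) (each class is closed under the relevant retracts, every morphism factors, and the classes are mutually weakly orthogonal). -/

import Mathlib

open CategoryTheory

universe u v

namespace Paper

/-- A span from `a` to `b` in `C`. -/
structure SpanCorner (C : Type u) [Category.{v} C] (a b : C) : Type (max u v) where
  mid : C
  l : mid ⟶ a
  r : mid ⟶ b

/-- Isomorphism of spans. -/
def SpanRel (C : Type u) [Category.{v} C] {a b : C} (s t : SpanCorner C a b) : Prop :=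
  ∃ e : s.mid ≅ t.mid, e.hom ≫ t.l = s.l ∧ e.hom ≫ t.r = s.r

/-- Morphisms of the span category: isomorphism classes of spans. -/
def SpanHom (C : Type u) [Category.{v} C] (a b : C) : Type (max u v) :=
  Quot (fun s t : SpanCorner C a b => SpanRel C s t)

def mkSpan {C : Type u} [Category.{v} C] {a b : C} (mid : C) (l : mid ⟶ a) (r : mid ⟶ b) :
    SpanHom C a b :=
  Quot.mk _ ⟨mid, l, r⟩

/-- The category `Span C`: a composition of classes of spans, computed by (any)
pullback, which is unital and associative. -/
structure SpanCat (C : Type u) [Category.{v} C] where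
  comp : ∀ {a b c : C}, SpanHom C a b → SpanHom C b c → SpanHom C a c
  compat : ∀ {a b c : C} (s : SpanCorner C a b) (t : SpanCorner C b c)
    (P : C) (p1 : P ⟶ s.mid) (p2 : P ⟶ t.mid),
    IsPullback p1 p2 s.r t.l →
    comp (Quot.mk _ s) (Quot.mk _ t) = mkSpan P (p1 ≫ s.l) (p2 ≫ t.r)
  id_comp : ∀ {a b : C} (f : SpanHom C a b), comp (mkSpan a (𝟙 a) (𝟙 a)) f = f
  comp_id : ∀ {a b : C} (f : SpanHom C a b), comp f (mkSpan b (𝟙 b) (𝟙 b)) = f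
  assoc : ∀ {a b c d : C} (f : SpanHom C a b) (g : SpanHom C b c) (h : SpanHom C c d),
    comp (comp f g) h = comp f (comp g h)

/-- The class of spans with identity forward leg. -/
def SpanInE {C : Type u} [Category.{v} C] {a b : C} (f : SpanHom C a b) : Prop :=
  ∃ u : b ⟶ a, f = mkSpan b u (𝟙 b)

/-- The class of spans with identity backward leg. -/
def SpanInM {C : Type u} [Category.{v} C] {a b : C} (f : SpanHom C a b) : Prop :=
  ∃ g : a ⟶ b, f = mkSpan a (𝟙 a) g

/-- Left lifting property against all maps in `M`. -/
def SpanLLP {C : Type u} [Category.{v} C] (S : SpanCat C)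
    (M : ∀ {x y : C}, SpanHom C x y → Prop) {a b : C} (f : SpanHom C a b) : Prop :=
  ∀ {x y : C} (m : SpanHom C x y), M m →
    ∀ (u : SpanHom C a x) (v : SpanHom C b y), S.comp f v = S.comp u m →
      ∃ d : SpanHom C b x, S.comp f d = u ∧ S.comp d m = v

/-- Right lifting property against all maps in `E`. -/
def SpanRLP {C : Type u} [Category.{v} C] (S : SpanCat C)
    (E : ∀ {x y : C}, SpanHom C x y → Prop) {x y : C} (m : SpanHom C x y) : Prop :=
  ∀ {a b : C} (f : SpanHom C a b), E f →
    ∀ (u : SpanHom C a x) (v : SpanHom C b y), S.comp f v = S.comp u m →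
      ∃ d : SpanHom C b x, S.comp f d = u ∧ S.comp d m = v

end Paper

namespace Paper


section Aux

variable {C : Type u} [Category.{v} C]

theorem spanRel_equivalence (a b : C) :
    _root_.Equivalence (fun s t : SpanCorner C a b => SpanRel C s t) where
  refl s := ⟨Iso.refl _, by simp, by simp⟩
  symm := by
    rintro s t ⟨e, h1, h2⟩
    exact ⟨e.symm, by simp [← h1], by simp [← h2]⟩
  trans := by
    rintro s t w ⟨e, h1, h2⟩ ⟨e', h1', h2'⟩
    exact ⟨e ≪≫ e', by simp [h1', h1], by simp [h2', h2]⟩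

theorem mkSpan_eq_iff {a b : C} {P Q : C} {l1 : P ⟶ a} {r1 : P ⟶ b}
    {l2 : Q ⟶ a} {r2 : Q ⟶ b} :
    mkSpan P l1 r1 = mkSpan Q l2 r2 ↔
      ∃ e : P ≅ Q, e.hom ≫ l2 = l1 ∧ e.hom ≫ r2 = r1 := by
  constructor
  · intro h
    exact ((spanRel_equivalence a b).eqvGen_iff).mp (Quot.eq.mp h)
  · intro h
    exact Quot.sound h

theorem quot_mk_eq {a b : C} (s : SpanCorner C a b) :
    (Quot.mk (fun s t : SpanCorner C a b => SpanRel C s t) s : SpanHom C a b) =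
      mkSpan s.mid s.l s.r := rfl

theorem comp_e (S : SpanCat C) {a b c : C} (u : b ⟶ a) (P : C) (l : P ⟶ b) (r : P ⟶ c) :
    S.comp (mkSpan b u (𝟙 b)) (mkSpan P l r) = mkSpan P (l ≫ u) r := by
  have h := S.compat ⟨b, u, 𝟙 b⟩ ⟨P, l, r⟩ P l (𝟙 P)
    (IsPullback.of_vert_isIso ⟨by simp⟩)
  simp at h; exact h

theorem comp_m (S : SpanCat C) {a b c : C} (P : C) (l : P ⟶ a) (r : P ⟶ b) (g : b ⟶ c) :
    S.comp (mkSpan P l r) (mkSpan b (𝟙 b) g) = mkSpan P l (r ≫ g) := by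
  have h := S.compat ⟨P, l, r⟩ ⟨b, 𝟙 b, g⟩ P (𝟙 P) r
    (IsPullback.of_horiz_isIso ⟨by simp⟩)
  simp at h; exact h

theorem isIso_of_section_of_isIso {X Y : C} (r : X ⟶ Y) (k : Y ⟶ X)
    (h1 : k ≫ r = 𝟙 Y) (h2 : IsIso (r ≫ k)) : IsIso r := by
  have hepi : Epi r := by
    constructor
    intro Z g h hg
    calc g = k ≫ r ≫ g := by rw [← Category.assoc, h1, Category.id_comp]
    _ = k ≫ r ≫ h := by rw [hg]
    _ = h := by rw [← Category.assoc, h1, Category.id_comp]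
  refine ⟨k ≫ inv (r ≫ k), ?_, ?_⟩
  · rw [← Category.assoc, IsIso.hom_inv_id]
  · rw [← cancel_epi r, Category.comp_id, ← Category.assoc, ← Category.assoc,
      IsIso.hom_inv_id, Category.id_comp]

theorem lift_exists (S : SpanCat C) {a b x y : C} (u' : b ⟶ a) (g : x ⟶ y)
    (uu : SpanHom C a x) (v : SpanHom C b y)
    (h : S.comp (mkSpan b u' (𝟙 b)) v = S.comp uu (mkSpan x (𝟙 x) g)) :
    ∃ d : SpanHom C b x,
      S.comp (mkSpan b u' (𝟙 b)) d = uu ∧ S.comp d (mkSpan x (𝟙 x) g) = v := by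
  obtain ⟨s, rfl⟩ := Quot.exists_rep uu
  obtain ⟨t, rfl⟩ := Quot.exists_rep v
  rw [quot_mk_eq s, quot_mk_eq t, comp_e S u', comp_m S] at h
  obtain ⟨e, he1, he2⟩ := mkSpan_eq_iff.mp h
  refine ⟨mkSpan t.mid t.l (e.hom ≫ s.r), ?_, ?_⟩
  · rw [comp_e]
    exact Quot.sound ⟨e, he1, rfl⟩
  · rw [comp_m]
    have hr : (e.hom ≫ s.r) ≫ g = t.r := by rw [Category.assoc]; exact he2
    rw [hr]
    rfl

end Aux

/-- For a category `C` with pullbacks, the two canonical classes of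
morphisms of `Span C` (spans with identity forward leg, and spans with identity backward
leg) form a weak factorization system: every morphism factors, the first class is
exactly the class of maps with the left lifting property against the second, and the
second is exactly the class of maps with the right lifting property against the first. -/
theorem statement4 (C : Type u) [Category.{v} C] [Limits.HasPullbacks C]
    (S : SpanCat C) :
    (∀ {a b : C} (f : SpanHom C a b),
        ∃ (x : C) (e : SpanHom C a x) (m : SpanHom C x b),
          SpanInE e ∧ SpanInM m ∧ S.comp e m = f) ∧
    (∀ {a b : C} (f : SpanHom C a b),
        SpanInE f ↔ SpanLLP S (fun m => SpanInM m) f) ∧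
    (∀ {x y : C} (m : SpanHom C x y),
        SpanInM m ↔ SpanRLP S (fun e => SpanInE e) m) := by
  refine ⟨?_, ?_, ?_⟩
  · -- factorization
    intro a b f
    obtain ⟨s, rfl⟩ := Quot.exists_rep f
    refine ⟨s.mid, mkSpan s.mid s.l (𝟙 s.mid), mkSpan s.mid (𝟙 s.mid) s.r,
      ⟨s.l, rfl⟩, ⟨s.r, rfl⟩, ?_⟩
    rw [comp_e, Category.id_comp]
    rfl
  · -- E = LLP(M)
    intro a b f
    constructor
    · rintro ⟨u', rfl⟩ x y m hm uu v hsq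
      obtain ⟨g, rfl⟩ := hm
      exact lift_exists S u' g uu v hsq
    · intro hf
      obtain ⟨s, rfl⟩ := Quot.exists_rep f
      obtain ⟨d, hd1, hd2⟩ := hf (mkSpan s.mid (𝟙 s.mid) s.r) ⟨s.r, rfl⟩
        (mkSpan s.mid s.l (𝟙 s.mid)) (mkSpan b (𝟙 b) (𝟙 b))
        (by rw [quot_mk_eq s, S.comp_id, comp_e, Category.id_comp])
      obtain ⟨t, rfl⟩ := Quot.exists_rep d
      rw [quot_mk_eq t, comp_m] at hd2
      obtain ⟨e1, h11, h12⟩ := mkSpan_eq_iff.mp hd2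
      simp only [Category.comp_id] at h11 h12
      haveI : IsIso t.l := h11 ▸ (inferInstance : IsIso e1.hom)
      have hc := S.compat s t s.mid (𝟙 s.mid) (s.r ≫ e1.inv)
        (IsPullback.of_horiz_isIso ⟨by rw [← h11]; simp⟩)
      rw [hc] at hd1
      obtain ⟨e2, h21, h22⟩ := mkSpan_eq_iff.mp hd1
      simp only [Category.comp_id] at h22
      have hk : (e1.inv ≫ t.r) ≫ s.r = 𝟙 b := by
        rw [Category.assoc, ← h12]; simp
      have hio : IsIso (s.r ≫ e1.inv ≫ t.r) := by
        rw [← Category.assoc, ← h22]; infer_instance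
      have : IsIso s.r := isIso_of_section_of_isIso s.r (e1.inv ≫ t.r) hk hio
      exact ⟨inv s.r ≫ s.l, Quot.sound ⟨asIso s.r, by simp, by simp⟩⟩
  · -- M = RLP(E)
    intro x y m
    constructor
    · rintro ⟨g, rfl⟩ a b f hf uu v hsq
      obtain ⟨u', rfl⟩ := hf
      exact lift_exists S u' g uu v hsq
    · intro hm
      obtain ⟨s, rfl⟩ := Quot.exists_rep m
      obtain ⟨d, hd1, hd2⟩ := hm (mkSpan s.mid s.l (𝟙 s.mid)) ⟨s.l, rfl⟩
        (mkSpan x (𝟙 x) (𝟙 x)) (mkSpan s.mid (𝟙 s.mid) s.r)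
        (by rw [quot_mk_eq s, S.id_comp, comp_e, Category.id_comp])
      obtain ⟨t, rfl⟩ := Quot.exists_rep d
      rw [quot_mk_eq t, comp_e] at hd1
      obtain ⟨e1, h11, h12⟩ := mkSpan_eq_iff.mp hd1
      simp only [Category.comp_id] at h11 h12
      haveI : IsIso t.r := h12 ▸ (inferInstance : IsIso e1.hom)
      have hc := S.compat t s s.mid (s.l ≫ e1.inv) (𝟙 s.mid)
        (IsPullback.of_vert_isIso ⟨by rw [← h12]; simp⟩)
      rw [hc] at hd2
      obtain ⟨e2, h21, h22⟩ := mkSpan_eq_iff.mp hd2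
      simp only [Category.comp_id] at h21
      have hk : (e1.inv ≫ t.l) ≫ s.l = 𝟙 x := by
        rw [Category.assoc, ← h11]; simp
      have hio : IsIso (s.l ≫ e1.inv ≫ t.l) := by
        rw [← Category.assoc, ← h21]; infer_instance
      have : IsIso s.l := isIso_of_section_of_isIso s.l (e1.inv ≫ t.l) hk hio
      exact ⟨inv s.l ≫ s.r, Quot.sound ⟨asIso s.l, by simp, by simp⟩⟩


end Paper
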